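/- arXiv:1708.00928 — 6 statements merged into one kernel-verified Lean document; each statement's English description precedes it below -/
import Mathlib

section
/- Let n ≥ 4 be an even integer and d ≥ 1 an integer. Then there are no non-trivial primitive integer solutions of 3x² + 2d² = yⁿ; that is, there are no integers x, y with x ≠ 0 and gcd(x,y) = 1 satisfying 3x² + 2d² = yⁿ. -/
/-- For `n ≥ 4` an even integer and `d ≥ 1`, the equation `3x² + 2d² = yⁿ`
has no non-trivial primitive integer solutions. -/
theorem stmt1 (n : ℕ) (hn : 4 ≤ n) (hneven : Even n) (d : ℤ) (hd : 1 ≤ d) :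
    ¬ ∃ x y : ℤ, x ≠ 0 ∧ IsCoprime x y ∧ 3 * x ^ 2 + 2 * d ^ 2 = y ^ n := by
  rintro ⟨x, y, hx, hcop, heq⟩
  obtain ⟨m, hm⟩ := hneven
  have hm2 : 2 ≤ m := by omega
  have hzsq : 3 * x ^ 2 + 2 * d ^ 2 = (y ^ m) ^ 2 := by
    rw [heq, hm]; ring
  set z : ℤ := y ^ m with hz
  have key : ∀ a b : ZMod 3, 2 * a ^ 2 = b ^ 2 → a = 0 ∧ b = 0 := by decide
  have hmod : 2 * (d : ZMod 3) ^ 2 = (z : ZMod 3) ^ 2 := by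
    have := congrArg (fun t : ℤ => (t : ZMod 3)) hzsq
    push_cast at this
    have h3 : (3 : ZMod 3) = 0 := rfl
    linear_combination this - (x : ZMod 3) ^ 2 * h3
  obtain ⟨hd0, hz0⟩ := key _ _ hmod
  have h3d : (3 : ℤ) ∣ d := (ZMod.intCast_zmod_eq_zero_iff_dvd d 3).mp hd0
  have h3z : (3 : ℤ) ∣ z := (ZMod.intCast_zmod_eq_zero_iff_dvd z 3).mp hz0
  obtain ⟨b, hb⟩ := h3d
  obtain ⟨a, ha⟩ := h3z
  have hx2 : x ^ 2 = 3 * (a ^ 2 - 2 * b ^ 2) := by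
    have : 3 * x ^ 2 + 2 * (3 * b) ^ 2 = (3 * a) ^ 2 := by rw [← hb, ← ha]; exact hzsq
    nlinarith [this]
  have h3x : (3 : ℤ) ∣ x :=
    Int.prime_three.dvd_of_dvd_pow (n := 2) ⟨_, hx2⟩
  have h3y : (3 : ℤ) ∣ y :=
    Int.prime_three.dvd_of_dvd_pow (n := m) (by rw [← hz, ha]; exact ⟨a, rfl⟩)
  have : IsUnit (3 : ℤ) := hcop.isUnit_of_dvd' h3x h3y
  rw [Int.isUnit_iff] at this
  omega
end

section
/- Let n be an odd prime, d ≥ 1 an integer, and let (x,y) be a non-trivial primitive solution of 3x² + 2d² = yⁿ (so x ≠ 0 and gcd(x,y) = 1), and suppose u, v are integers with 3^{(n-1)/2} · (3x + d√-6) = (3u + v√-6)ⁿ in ℤ[√-6]. Then: (i) u ≠ 0 and v ≠ 0; (ii) the integers 12u² and 3u² + 2v² are coprime; (iii) for every integer k ≥ 1, (3u + v√-6)ᵏ ≠ (3u - v√-6)ᵏ (equivalently, the quotient (3u+v√-6)/(3u-v√-6) is not a root of unity). -/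
private lemma norm_pow6 (z : Zsqrtd (-6)) (k : ℕ) : (z ^ k).norm = z.norm ^ k :=
  map_pow Zsqrtd.normMonoidHom z k

private lemma lemA (y A : ℤ) (k : ℕ) (hk : Odd k) (h3 : ¬(3:ℤ) ∣ y) (hy : y ≠ 0)
    (h : A * A = (3 * y) ^ k) : False := by
  have hb3 : ¬ (3 ∣ y.natAbs) := by
    intro hh
    exact h3 (Int.natAbs_dvd_natAbs.mp (by simpa using hh))
  have hb0 : y.natAbs ≠ 0 := Int.natAbs_ne_zero.mpr hy
  have hnat : A.natAbs * A.natAbs = 3 ^ k * y.natAbs ^ k := by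
    have := congrArg Int.natAbs h
    simpa [Int.natAbs_mul, Int.natAbs_pow, mul_pow] using this
  have ha0 : A.natAbs ≠ 0 := by
    intro h0
    rw [h0] at hnat
    exact (mul_ne_zero (pow_ne_zero k (by norm_num)) (pow_ne_zero k hb0)) hnat.symm
  have hfac := congrArg (fun t : ℕ => t.factorization 3) hnat
  simp only [Nat.factorization_mul ha0 ha0,
    Nat.factorization_mul (pow_ne_zero k (by norm_num : (3:ℕ) ≠ 0)) (pow_ne_zero k hb0),
    Nat.factorization_pow, Nat.Prime.factorization (by norm_num : Nat.Prime 3),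
    Finsupp.add_apply, Finsupp.smul_apply, Finsupp.single_apply, smul_eq_mul,
    Nat.factorization_eq_zero_of_not_dvd hb3] at hfac
  simp at hfac
  rw [Nat.odd_iff] at hk
  omega

private lemma keyIII (y : ℤ) (hodd : ¬ (2:ℤ) ∣ y) (h3 : ¬ (3:ℤ) ∣ y)
    (z : Zsqrtd (-6)) (hz : z.norm = 3 * y) :
    ∀ k : ℕ, 1 ≤ k → z ^ k ≠ star z ^ k := by
  have hy0 : y ≠ 0 := fun hy => hodd (hy ▸ dvd_zero 2)
  intro k
  induction k using Nat.strong_induction_on with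
  | _ k IH =>
    intro hk hEq
    rcases Nat.even_or_odd k with hke | hko
    · obtain ⟨j, rfl⟩ := hke
      have hj : 1 ≤ j := by omega
      have hsplit : (z ^ j - star z ^ j) * (z ^ j + star z ^ j) = 0 := by
        have h' : z ^ (j + j) = star z ^ (j + j) := hEq
        rw [pow_add, pow_add] at h'
        linear_combination h'
      have hsplit' : (z ^ j - star z ^ j) = 0 ∨ (z ^ j + star z ^ j) = 0 := by
        have hn0 := congrArg Zsqrtd.norm hsplit
        rw [Zsqrtd.norm_mul, Zsqrtd.norm_zero] at hn0
        rcases mul_eq_zero.mp hn0 with h0 | h0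
        · exact Or.inl ((Zsqrtd.norm_eq_zero_iff (by norm_num) _).mp h0)
        · exact Or.inr ((Zsqrtd.norm_eq_zero_iff (by norm_num) _).mp h0)
      rcases hsplit' with h0 | h0
      · exact IH j (by omega) hj (sub_eq_zero.mp h0)
      · have hre : (z ^ j).re = 0 := by
          have h1 : (z ^ j).re + (star z ^ j).re = 0 := by
            have := congrArg Zsqrtd.re h0
            simpa [Zsqrtd.re_add] using this
          rw [← star_pow, Zsqrtd.re_star] at h1
          omega
        have hn : (z ^ j).norm = (3*y) ^ j := by rw [norm_pow6, hz]
        have h2d : (2:ℤ) ∣ (3*y) ^ j := by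
          rw [← hn, Zsqrtd.norm_def, hre]
          exact ⟨3 * ((z^j).im * (z^j).im), by ring⟩
        rcases Int.prime_two.dvd_mul.mp (Int.prime_two.dvd_of_dvd_pow h2d) with h' | h'
        · norm_num at h'
        · exact hodd h'
    · have him : (z ^ k).im = 0 := by
        have h1 : (z ^ k).im = - (z ^ k).im := by
          conv_lhs => rw [hEq, ← star_pow]
          exact Zsqrtd.im_star _
        omega
      have h2 : (z^k).re * (z^k).re = (3*y)^k := by
        have h1 := norm_pow6 z k
        rw [hz, Zsqrtd.norm_def, him] at h1
        linarith [h1]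
      exact lemA y _ k hko h3 hy0 h2

/-- Suppose `n` is an odd prime, `d ≥ 1`, `(x,y)` is a non-trivial primitive
solution of `3x² + 2d² = yⁿ`, and `u, v` are integers with
`3^((n-1)/2) · (3x + d√-6) = (3u + v√-6)ⁿ` in `ℤ[√-6]`. Then `u ≠ 0`, `v ≠ 0`,
the integers `12u²` and `3u² + 2v²` are coprime, and
`(3u + v√-6)ᵏ ≠ (3u - v√-6)ᵏ` for all `k ≥ 1`
(i.e. `(3u+v√-6)/(3u-v√-6)` is not a root of unity):
the pair `((3u+v√-6)/√3, (3u-v√-6)/√3)` is a Lehmer pair. -/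
theorem stmt5 (n : ℕ) (hn : n.Prime) (hnodd : Odd n) (d : ℤ) (hd : 1 ≤ d)
    (x y : ℤ) (hx : x ≠ 0) (hxy : IsCoprime x y)
    (h : 3 * x ^ 2 + 2 * d ^ 2 = y ^ n) (u v : ℤ)
    (huv : (3 : Zsqrtd (-6)) ^ ((n - 1) / 2) *
          (3 * (x : Zsqrtd (-6)) + (d : Zsqrtd (-6)) * Zsqrtd.sqrtd) =
        (3 * (u : Zsqrtd (-6)) + (v : Zsqrtd (-6)) * Zsqrtd.sqrtd) ^ n) :
    u ≠ 0 ∧ v ≠ 0 ∧ IsCoprime (12 * u ^ 2) (3 * u ^ 2 + 2 * v ^ 2) ∧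
      ∀ k : ℕ, 1 ≤ k →
        (3 * (u : Zsqrtd (-6)) + (v : Zsqrtd (-6)) * Zsqrtd.sqrtd) ^ k ≠
          (3 * (u : Zsqrtd (-6)) - (v : Zsqrtd (-6)) * Zsqrtd.sqrtd) ^ k := by
  obtain ⟨m, rfl⟩ := hnodd
  have hm1 : 1 ≤ m := by
    by_contra hm
    interval_cases m
    · norm_num at hn
  set α : Zsqrtd (-6) := 3 * (u : Zsqrtd (-6)) + (v : Zsqrtd (-6)) * Zsqrtd.sqrtd with hα
  set w : Zsqrtd (-6) := 3 * (x : Zsqrtd (-6)) + (d : Zsqrtd (-6)) * Zsqrtd.sqrtd with hw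
  simp only [show (2*m+1-1)/2 = m from by omega] at huv
  -- components
  have h3c : ((3 : Zsqrtd (-6))) = ((3 : ℤ) : Zsqrtd (-6)) := by norm_num
  have hαre : α.re = 3 * u := by
    rw [hα, h3c]
    simp [Zsqrtd.re_add, Zsqrtd.re_mul, Zsqrtd.re_intCast, Zsqrtd.im_intCast,
      Zsqrtd.re_sqrtd, Zsqrtd.im_sqrtd]
  have hαim : α.im = v := by
    rw [hα, h3c]
    simp [Zsqrtd.im_add, Zsqrtd.im_mul, Zsqrtd.re_intCast, Zsqrtd.im_intCast,
      Zsqrtd.re_sqrtd, Zsqrtd.im_sqrtd]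
  have hwre : w.re = 3 * x := by
    rw [hw, h3c]
    simp [Zsqrtd.re_add, Zsqrtd.re_mul, Zsqrtd.re_intCast, Zsqrtd.im_intCast,
      Zsqrtd.re_sqrtd, Zsqrtd.im_sqrtd]
  have hwim : w.im = d := by
    rw [hw, h3c]
    simp [Zsqrtd.im_add, Zsqrtd.im_mul, Zsqrtd.re_intCast, Zsqrtd.im_intCast,
      Zsqrtd.re_sqrtd, Zsqrtd.im_sqrtd]
  have h3mc : (3 : Zsqrtd (-6)) ^ m = (((3:ℤ) ^ m : ℤ) : Zsqrtd (-6)) := by push_cast; rfl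
  have hLre : ((3 : Zsqrtd (-6)) ^ m * w).re = 3 ^ (m+1) * x := by
    rw [h3mc, Zsqrtd.re_smul, hwre]; ring
  have hLim : ((3 : Zsqrtd (-6)) ^ m * w).im = 3 ^ m * d := by
    rw [h3mc, Zsqrtd.im_smul, hwim]
  -- norms
  have hαnorm : α.norm = 3 * (3*u^2 + 2*v^2) := by
    rw [Zsqrtd.norm_def, hαre, hαim]; ring
  have hwnorm : w.norm = 3 * (3*x^2 + 2*d^2) := by
    rw [Zsqrtd.norm_def, hwre, hwim]; ring
  -- y = 3u² + 2v²
  have hy2 : y = 3*u^2 + 2*v^2 := by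
    have hN := congrArg Zsqrtd.norm huv
    rw [Zsqrtd.norm_mul, norm_pow6, norm_pow6, hwnorm, hαnorm, h3c,
      Zsqrtd.norm_intCast, h] at hN
    rw [mul_pow] at hN
    have hpow : (3:ℤ)^(2*m+1) = 3^m * 3^m * 3 := by
      rw [pow_succ, two_mul, pow_add]
    have hN' : (3*y) ^ (2*m+1) = (3*(3*u^2+2*v^2)) ^ (2*m+1) := by
      rw [mul_pow 3 y, hpow]
      linear_combination hN
    have := (Odd.strictMono_pow (R := ℤ) ⟨m, rfl⟩).injective hN'
    linarith
  -- u ≠ 0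
  have hu : u ≠ 0 := by
    intro hu0
    have hα2 : α ^ 2 = (((-6) * v^2 : ℤ) : Zsqrtd (-6)) := by
      ext
      · rw [pow_two, Zsqrtd.re_mul, hαre, hαim, hu0, Zsqrtd.re_intCast]; ring
      · rw [pow_two, Zsqrtd.im_mul, hαre, hαim, hu0, Zsqrtd.im_intCast]; ring
    have hre0 : (α ^ (2*m+1)).re = 0 := by
      rw [show 2*m+1 = 2*m + 1 from rfl, pow_succ, pow_mul, hα2, ← Int.cast_pow,
        Zsqrtd.re_smul, hαre, hu0]
      ring
    rw [← huv, hLre] at hre0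
    have : (3:ℤ) ^ (m+1) ≠ 0 := pow_ne_zero _ (by norm_num)
    exact hx (by
      rcases mul_eq_zero.mp hre0 with h' | h'
      · exact absurd h' this
      · exact h')
  -- v ≠ 0
  have hv : v ≠ 0 := by
    intro hv0
    have hαc : α = (((3*u : ℤ)) : Zsqrtd (-6)) := by
      ext
      · rw [hαre, Zsqrtd.re_intCast]
      · rw [hαim, hv0, Zsqrtd.im_intCast]
    have him0 : (α ^ (2*m+1)).im = 0 := by
      rw [hαc, ← Int.cast_pow, Zsqrtd.im_intCast]
    rw [← huv, hLim] at him0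
    have h3m : (3:ℤ) ^ m ≠ 0 := pow_ne_zero _ (by norm_num)
    rcases mul_eq_zero.mp him0 with h' | h'
    · exact h3m h'
    · omega
  -- y odd
  have hyodd : ¬ (2:ℤ) ∣ y := by
    intro h2y
    have h2x : (2:ℤ) ∣ x := by
      have h1 : (2:ℤ) ∣ 3 * x^2 := by
        have h2 : (2:ℤ) ∣ y ^ (2*m+1) := dvd_pow h2y (by omega)
        rw [← h] at h2
        have h3 := dvd_sub h2 (⟨d^2, rfl⟩ : (2:ℤ) ∣ 2*d^2)
        rwa [show 3*x^2 + 2*d^2 - 2*d^2 = 3*x^2 from by ring] at h3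
      rcases Int.prime_two.dvd_mul.mp h1 with h' | h'
      · norm_num at h'
      · exact Int.prime_two.dvd_of_dvd_pow h'
    exact Int.prime_two.not_unit (hxy.isUnit_of_dvd' h2x h2y)
  -- 3 ∤ y
  have hy3 : ¬ (3:ℤ) ∣ y := by
    intro h3y
    have h3v : (3:ℤ) ∣ v := by
      have h1 : (3:ℤ) ∣ 2 * v^2 := by
        rw [hy2] at h3y
        have h3 := dvd_sub h3y (⟨u^2, rfl⟩ : (3:ℤ) ∣ 3*u^2)
        rwa [show 3*u^2 + 2*v^2 - 3*u^2 = 2*v^2 from by ring] at h3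
      rcases Int.prime_three.dvd_mul.mp h1 with h' | h'
      · norm_num at h'
      · exact Int.prime_three.dvd_of_dvd_pow h'
    have hdvdα : ((3:ℤ) : Zsqrtd (-6)) ∣ α :=
      (Zsqrtd.intCast_dvd 3 α).mpr ⟨by rw [hαre]; exact ⟨u, rfl⟩, by rwa [hαim]⟩
    have h1 : (((3:ℤ) ^ (2*m+1) : ℤ) : Zsqrtd (-6)) ∣ (3 : Zsqrtd (-6)) ^ m * w := by
      rw [huv]
      have := pow_dvd_pow_of_dvd hdvdα (2*m+1)
      rwa [← Int.cast_pow] at this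
    have h2 : (3:ℤ) ^ (2*m+1) ∣ ((3 : Zsqrtd (-6)) ^ m * w).re :=
      ((Zsqrtd.intCast_dvd _ _).mp h1).1
    rw [hLre] at h2
    have h3x : (3:ℤ) ∣ x := by
      have hstep : (3:ℤ)^(m+1) * 3 ∣ 3^(m+1) * x :=
        dvd_trans (by rw [← pow_succ]; exact pow_dvd_pow 3 (by omega)) h2
      exact (mul_dvd_mul_iff_left (pow_ne_zero (m+1) (by norm_num : (3:ℤ) ≠ 0))).mp hstep
    exact Int.prime_three.not_unit (hxy.isUnit_of_dvd' h3x h3y)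
  refine ⟨hu, hv, ?_, ?_⟩
  · -- coprimality
    rw [← hy2, Int.isCoprime_iff_gcd_eq_one]
    by_contra hg
    obtain ⟨p, hp, hpg⟩ := Nat.exists_prime_and_dvd hg
    have hq : Prime ((p:ℕ) : ℤ) := Nat.prime_iff_prime_int.mp hp
    set q : ℤ := (p : ℤ) with hqdef
    have hq12 : q ∣ 12 * u^2 :=
      dvd_trans (Int.natCast_dvd_natCast.mpr hpg) (Int.gcd_dvd_left _ _)
    have hqy : q ∣ y := dvd_trans (Int.natCast_dvd_natCast.mpr hpg) (Int.gcd_dvd_right _ _)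
    have hp2 : p ≠ 2 := by
      rintro rfl
      exact hyodd (by exact_mod_cast hqy)
    have hp3 : p ≠ 3 := by
      rintro rfl
      exact hy3 (by exact_mod_cast hqy)
    have hqn2 : ¬ q ∣ 2 := by
      intro hh
      rw [hqdef] at hh
      exact hp2 ((Nat.prime_dvd_prime_iff_eq hp Nat.prime_two).mp (by exact_mod_cast hh))
    have hqn3 : ¬ q ∣ 3 := by
      intro hh
      rw [hqdef] at hh
      exact hp3 ((Nat.prime_dvd_prime_iff_eq hp Nat.prime_three).mp (by exact_mod_cast hh))
    have hqu : q ∣ u := by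
      have hq' : q ∣ 2 * (2 * (3 * u^2)) := by
        rwa [show (12:ℤ) * u^2 = 2*(2*(3*u^2)) from by ring] at hq12
      rcases hq.dvd_mul.mp hq' with h' | h'
      · exact absurd h' hqn2
      rcases hq.dvd_mul.mp h' with h'' | h''
      · exact absurd h'' hqn2
      rcases hq.dvd_mul.mp h'' with h3 | h3
      · exact absurd h3 hqn3
      · exact hq.dvd_of_dvd_pow h3
    have hqv : q ∣ v := by
      have h1 : q ∣ 2 * v^2 := by
        have h2 : q ∣ y - 3 * u^2 :=
          dvd_sub hqy (Dvd.dvd.mul_left (dvd_pow hqu (by norm_num)) 3)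
        rwa [hy2, show 3*u^2 + 2*v^2 - 3*u^2 = 2*v^2 from by ring] at h2
      rcases hq.dvd_mul.mp h1 with h' | h'
      · exact absurd h' hqn2
      · exact hq.dvd_of_dvd_pow h'
    have hdvdα : ((q:ℤ) : Zsqrtd (-6)) ∣ α :=
      (Zsqrtd.intCast_dvd q α).mpr ⟨by rw [hαre]; exact hqu.mul_left 3, by rwa [hαim]⟩
    have h1 : ((q ^ (2*m+1) : ℤ) : Zsqrtd (-6)) ∣ (3 : Zsqrtd (-6)) ^ m * w := by
      rw [huv]
      have := pow_dvd_pow_of_dvd hdvdα (2*m+1)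
      rwa [← Int.cast_pow] at this
    have h2 : q ^ (2*m+1) ∣ ((3 : Zsqrtd (-6)) ^ m * w).re :=
      ((Zsqrtd.intCast_dvd _ _).mp h1).1
    rw [hLre] at h2
    have hqx : q ∣ x := by
      have hq1 : q ∣ 3 ^ (m+1) * x := dvd_trans (dvd_pow_self q (by omega)) h2
      rcases hq.dvd_mul.mp hq1 with h' | h'
      · exact absurd (hq.dvd_of_dvd_pow h') hqn3
      · exact h'
    exact hq.not_unit (hxy.isUnit_of_dvd' hqx hqy)
  · -- Lehmer condition
    have hstar : 3 * (u : Zsqrtd (-6)) - (v : Zsqrtd (-6)) * Zsqrtd.sqrtd = star α := by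
      ext
      · rw [Zsqrtd.re_star, hαre, Zsqrtd.re_sub, Zsqrtd.re_mul, h3c]
        simp [Zsqrtd.re_intCast, Zsqrtd.im_intCast, Zsqrtd.re_sqrtd, Zsqrtd.im_sqrtd]
      · rw [Zsqrtd.im_star, hαim, Zsqrtd.im_sub, Zsqrtd.im_mul, h3c]
        simp [Zsqrtd.re_intCast, Zsqrtd.im_intCast, Zsqrtd.re_sqrtd, Zsqrtd.im_sqrtd]
    rw [hstar]
    exact keyIII y hyodd hy3 α (by rw [hαnorm, hy2])
end

section
/- Let n ≥ 3 be an odd integer, d ≥ 1 an integer, and suppose x, u, v are integers satisfying 3^{(n-1)/2} · (3x + d√-6) = (3u + v√-6)ⁿ in ℤ[√-6]. Then d = v · f_n(u,v); in particular v divides d. -/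
/-- The polynomial `f_n(X,Y) = Σ_{i=0}^{(n-1)/2} C(n,2i+1)·(-2)^i·3^((n-1)/2-i)·X^(n-1-2i)·Y^(2i)`
evaluated at integers. -/
def fpoly (n : ℕ) (x y : ℤ) : ℤ :=
  ∑ i ∈ Finset.range ((n - 1) / 2 + 1),
    (n.choose (2 * i + 1) : ℤ) * (-2) ^ i * 3 ^ ((n - 1) / 2 - i) *
      x ^ (n - 1 - 2 * i) * y ^ (2 * i)

open Finset

private def imHom : Zsqrtd (-6) →+ ℤ :=
  { toFun := Zsqrtd.im, map_zero' := rfl, map_add' := fun _ _ => rfl }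

@[simp] private lemma imHom_apply (z : Zsqrtd (-6)) : imHom z = z.im := rfl

private lemma sum_odd_aux (g : ℕ → ℤ) (h : ∀ k, Even k → g k = 0) :
    ∀ n, ∑ k ∈ range n, g k = ∑ i ∈ range (n / 2), g (2 * i + 1) := by
  intro n
  induction n using Nat.twoStepInduction with
  | zero => simp
  | one => simpa using h 0 Even.zero
  | more n ih _ =>
    rw [Finset.sum_range_succ, Finset.sum_range_succ, ih]
    have h2 : (n + 2) / 2 = n / 2 + 1 := by omega
    rw [h2, Finset.sum_range_succ]
    rcases Nat.even_or_odd n with he | ho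
    · have h1 : g n = 0 := h n he
      obtain ⟨t, ht⟩ := he
      have h3 : 2 * (n / 2) + 1 = n + 1 := by omega
      rw [h1, h3]; ring
    · have h1 : g (n + 1) = 0 := h (n + 1) (Odd.add_one ho)
      obtain ⟨t, ht⟩ := ho
      have h3 : 2 * (n / 2) + 1 = n := by omega
      rw [h1, h3]; ring

private lemma im_pow (a b : ℤ) (n : ℕ) :
    (((a : Zsqrtd (-6)) + (b : Zsqrtd (-6)) * Zsqrtd.sqrtd) ^ n).im
      = ∑ i ∈ range ((n + 1) / 2),
        (n.choose (2 * i + 1) : ℤ) * a ^ (n - (2 * i + 1)) * b ^ (2 * i + 1) * (-6) ^ i := by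
  have hsq : ((b : Zsqrtd (-6)) * Zsqrtd.sqrtd) ^ 2 = ((b ^ 2 * (-6) : ℤ) : Zsqrtd (-6)) := by
    apply Zsqrtd.ext <;>
      simp [pow_two, Zsqrtd.re_mul, Zsqrtd.im_mul, Zsqrtd.re_sqrtd, Zsqrtd.im_sqrtd,
        Zsqrtd.re_intCast, Zsqrtd.im_intCast] <;> ring
  have himcast : ∀ z : Zsqrtd (-6), z.im = imHom z := fun _ => rfl
  rw [add_comm, add_pow, himcast, map_sum]
  rw [sum_odd_aux _ ?_ (n + 1)]
  · apply Finset.sum_congr rfl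
    intro i _
    have hterm : ((b : Zsqrtd (-6)) * Zsqrtd.sqrtd) ^ (2 * i + 1)
        = (((b ^ 2 * (-6)) ^ i * b : ℤ) : Zsqrtd (-6)) * Zsqrtd.sqrtd := by
      rw [pow_succ, pow_mul, hsq]
      push_cast
      ring
    rw [imHom_apply, hterm,
      show ((a : Zsqrtd (-6)) ^ (n - (2 * i + 1))) = ((a ^ (n - (2 * i + 1)) : ℤ) : Zsqrtd (-6)) by
        push_cast; ring,
      show ((n.choose (2 * i + 1) : Zsqrtd (-6))) = (((n.choose (2 * i + 1) : ℤ)) : Zsqrtd (-6)) by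
        push_cast; ring]
    simp only [Zsqrtd.im_mul, Zsqrtd.re_mul, Zsqrtd.re_intCast, Zsqrtd.im_intCast,
      Zsqrtd.re_sqrtd, Zsqrtd.im_sqrtd]
    ring
  · intro k hk
    obtain ⟨t, ht⟩ := hk
    have hterm : ((b : Zsqrtd (-6)) * Zsqrtd.sqrtd) ^ k
        = (((b ^ 2 * (-6)) ^ t : ℤ) : Zsqrtd (-6)) := by
      rw [ht, show t + t = 2 * t by ring, pow_mul, hsq]; push_cast; ring
    rw [imHom_apply, hterm,
      show ((a : Zsqrtd (-6)) ^ (n - k)) = ((a ^ (n - k) : ℤ) : Zsqrtd (-6)) by push_cast; ring,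
      show ((n.choose k : Zsqrtd (-6))) = (((n.choose k : ℤ)) : Zsqrtd (-6)) by push_cast; ring]
    simp only [Zsqrtd.im_mul, Zsqrtd.re_mul, Zsqrtd.re_intCast, Zsqrtd.im_intCast]
    ring

/-- If `n ≥ 3` is odd, `d ≥ 1`, and the integers `x, u, v` satisfy
`3^((n-1)/2) · (3x + d√-6) = (3u + v√-6)ⁿ` in `ℤ[√-6]`, then
`d = v · f_n(u,v)`; in particular `v ∣ d`. -/
theorem stmt7 (n : ℕ) (hn : 3 ≤ n) (hnodd : Odd n) (d : ℤ) (hd : 1 ≤ d)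
    (x u v : ℤ)
    (h : (3 : Zsqrtd (-6)) ^ ((n - 1) / 2) *
          (3 * (x : Zsqrtd (-6)) + (d : Zsqrtd (-6)) * Zsqrtd.sqrtd) =
        (3 * (u : Zsqrtd (-6)) + (v : Zsqrtd (-6)) * Zsqrtd.sqrtd) ^ n) :
    d = v * fpoly n u v ∧ v ∣ d := by
  obtain ⟨m, hm⟩ := hnodd
  have hm2 : (n - 1) / 2 = m := by omega
  have hm3 : (n + 1) / 2 = m + 1 := by omega
  have him := congrArg Zsqrtd.im h
  have hL : ((3 : Zsqrtd (-6)) ^ ((n - 1) / 2) *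
      (3 * (x : Zsqrtd (-6)) + (d : Zsqrtd (-6)) * Zsqrtd.sqrtd)).im = 3 ^ m * d := by
    have hc : ((3 : Zsqrtd (-6)) ^ m) = (((3 : ℤ) ^ m : ℤ) : Zsqrtd (-6)) := by push_cast; ring
    rw [hm2]
    simp only [hc, Zsqrtd.im_mul, Zsqrtd.re_mul, Zsqrtd.im_add, Zsqrtd.re_add, Zsqrtd.re_intCast,
      Zsqrtd.im_intCast, Zsqrtd.re_sqrtd, Zsqrtd.im_sqrtd, Zsqrtd.im_ofNat, Zsqrtd.re_ofNat]
    ring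
  have hR : ((3 * (u : Zsqrtd (-6)) + (v : Zsqrtd (-6)) * Zsqrtd.sqrtd) ^ n).im
      = 3 ^ m * (v * fpoly n u v) := by
    rw [show (3 * (u : Zsqrtd (-6))) = ((3 * u : ℤ) : Zsqrtd (-6)) by push_cast; ring, im_pow, hm3]
    rw [fpoly, hm2, Finset.mul_sum, Finset.mul_sum]
    apply Finset.sum_congr rfl
    intro i hi
    have hi' : i ≤ m := by simpa using Nat.lt_succ_iff.mp (Finset.mem_range.mp hi)
    obtain ⟨j, hj⟩ : ∃ j, m = i + j := ⟨m - i, by omega⟩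
    have e1 : n - (2 * i + 1) = 2 * j := by omega
    have e2 : m - i = j := by omega
    have e3 : n - 1 - 2 * i = 2 * j := by omega
    have e4 : ((-6 : ℤ)) ^ i = (-2) ^ i * 3 ^ i := by
      rw [show ((-6 : ℤ)) = (-2) * 3 by norm_num, mul_pow]
    rw [e1, e2, e3, hj, e4]
    ring
  rw [hL, hR] at him
  have h3 : (3 : ℤ) ^ m ≠ 0 := by positivity
  have heq : d = v * fpoly n u v := by
    have := mul_left_cancel₀ h3 him
    linarith [this]
  exact ⟨heq, Dvd.intro _ heq.symm⟩
end

section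
/- Let n be an odd prime, let p > 3 be a prime, let b ≥ 2 and 1 ≤ t ≤ b-1 be integers, and let u be an integer with p ∤ u. If p^t · f_n(u, p^t) = p^b, then n = p and t = b - 1 (so that f_p(u, p^{b-1}) = p). -/
/-- If `n` is an odd prime, `p > 3` is prime, `b ≥ 2`, `1 ≤ t ≤ b - 1`,
`p ∤ u`, and `p^t · f_n(u, p^t) = p^b`, then `n = p` and `t = b - 1` (so
`f_p(u, p^(b-1)) = p`). -/
theorem stmt11 (n p : ℕ) (hn : n.Prime) (hnodd : Odd n) (hp : p.Prime)
    (hp3 : 3 < p) (b t : ℕ) (hb : 2 ≤ b) (ht1 : 1 ≤ t) (ht2 : t ≤ b - 1)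
    (u : ℤ) (hu : ¬ (p : ℤ) ∣ u)
    (h : (p : ℤ) ^ t * fpoly n u ((p : ℤ) ^ t) = (p : ℤ) ^ b) :
    n = p ∧ t = b - 1 := by
  set k := (n - 1) / 2 with hk
  set y : ℤ := (p : ℤ) ^ t with hy
  set c : ℤ := (n : ℤ) * 3 ^ k * u ^ (n - 1) with hc
  have hpz : Prime (p : ℤ) := Nat.prime_iff_prime_int.1 hp
  have hpne : (p : ℤ) ≠ 0 := hpz.ne_zero
  -- p does not divide 3
  have hp3' : ¬ (p : ℤ) ∣ 3 := by
    intro hd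
    have : p ∣ 3 := by exact_mod_cast hd
    have := Nat.le_of_dvd (by norm_num) this
    omega
  have hp3k : ¬ (p : ℤ) ∣ 3 ^ k := fun hd => hp3' (hpz.dvd_of_dvd_pow hd)
  have hpu : ¬ (p : ℤ) ∣ u ^ (n - 1) := fun hd => hu (hpz.dvd_of_dvd_pow hd)
  -- p^2 divides fpoly - c
  have hp2 : (p : ℤ) ^ 2 ∣ fpoly n u y - c := by
    have hsplit : fpoly n u y - c = ∑ i ∈ Finset.range k,
        ((n.choose (2 * (i + 1) + 1) : ℤ) * (-2) ^ (i + 1) * 3 ^ (k - (i + 1)) *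
          u ^ (n - 1 - 2 * (i + 1)) * y ^ (2 * (i + 1))) := by
      rw [fpoly, Finset.sum_range_succ']
      simp [hc, ← hk]
    rw [hsplit]
    apply Finset.dvd_sum
    intro i _
    have h1 : (p : ℤ) ^ 2 ∣ y ^ 2 := by
      rw [hy, ← pow_mul]
      exact pow_dvd_pow _ (by omega)
    exact Dvd.dvd.mul_left (h1.trans (pow_dvd_pow y (by omega))) _
  -- fpoly = p^(b-t)
  have hf : fpoly n u y = (p : ℤ) ^ (b - t) := by
    apply mul_left_cancel₀ (pow_ne_zero t hpne)
    rw [h, ← pow_add]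
    congr 1
    omega
  have hpf : (p : ℤ) ∣ fpoly n u y := by
    rw [hf]; exact dvd_pow_self _ (by omega)
  -- p divides c
  have hpc : (p : ℤ) ∣ c := by
    have h1 : (p : ℤ) ∣ fpoly n u y - c :=
      ((dvd_pow_self (p : ℤ) two_ne_zero)).trans hp2
    have := dvd_sub hpf h1
    simpa using this
  -- p ∣ n, hence n = p
  have hpn : (p : ℤ) ∣ (n : ℤ) := by
    rcases hpz.dvd_mul.mp hpc with h1 | h1
    · rcases hpz.dvd_mul.mp h1 with h2 | h2
      · exact h2
      · exact absurd h2 hp3k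
    · exact absurd h1 hpu
  have hnp : n = p := by
    have : p ∣ n := by exact_mod_cast hpn
    rcases (Nat.Prime.eq_one_or_self_of_dvd hn p this) with h1 | h1
    · exact absurd h1 hp.ne_one
    · omega
  refine ⟨hnp, ?_⟩
  by_contra hne
  have hbt : 2 ≤ b - t := by omega
  have hp2f : (p : ℤ) ^ 2 ∣ fpoly n u y := by
    rw [hf]; exact pow_dvd_pow _ hbt
  have hp2c : (p : ℤ) ^ 2 ∣ c := by
    have := dvd_sub hp2f hp2
    simpa using this
  have : (p : ℤ) ∣ 3 ^ k * u ^ (n - 1) := by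
    have hcval : c = (p : ℤ) * ((p:ℤ)^0 * (3 ^ k * u ^ (n - 1))) := by
      rw [hc, hnp]; ring
    rw [hcval, pow_two] at hp2c
    have := (mul_dvd_mul_iff_left hpne).mp hp2c
    simpa using this
  rcases hpz.dvd_mul.mp this with h1 | h1
  · exact hp3k h1
  · exact hpu h1
end

section
/- Let p > 3 be a prime and b ≥ 2 an integer. If there exists an integer u with f_p(u, p^{b-1}) = p, then p ≡ 1 (mod 12). -/
/-- If `p > 3` is a prime, `b ≥ 2`, and `f_p(u, p^(b-1)) = p` has an integer
solution `u`, then `p ≡ 1 (mod 12)`. -/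
theorem stmt12 (p : ℕ) (hp : p.Prime) (hp3 : 3 < p) (b : ℕ) (hb : 2 ≤ b)
    (hsol : ∃ u : ℤ, fpoly p u ((p : ℤ) ^ (b - 1)) = p) :
    p ≡ 1 [MOD 12] := by
  obtain ⟨u, hu⟩ := hsol
  haveI : Fact p.Prime := ⟨hp⟩
  haveI : Fact (Nat.Prime 3) := ⟨by norm_num⟩
  have hpo : p % 2 = 1 := hp.eq_two_or_odd.resolve_left (by omega)
  set N := (p - 1) / 2 with hN
  have h2N : 2 * N + 1 = p := by omega
  have hpne : (p : ZMod 3) ≠ 0 := by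
    rw [Ne, ZMod.natCast_eq_zero_iff]
    intro h
    have := (Nat.prime_dvd_prime_iff_eq (by norm_num) hp).mp h
    omega
  rw [fpoly] at hu
  -- Step A : p % 3 = 1
  have hA : (p : ZMod 3) = 1 := by
    have h30 : (3 : ZMod 3) = 0 := by exact_mod_cast ZMod.natCast_self 3
    have hm2 : (-2 : ZMod 3) = 1 := by linear_combination -h30
    have hcast := congrArg (fun z : ℤ => (z : ZMod 3)) hu
    push_cast at hcast
    rw [← hN, Finset.sum_range_succ] at hcast
    have hz : ∑ x ∈ Finset.range N,
        ((p.choose (2 * x + 1) : ZMod 3) * (-2) ^ x * 3 ^ (N - x) *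
          (u : ZMod 3) ^ (p - 1 - 2 * x) * ((p : ZMod 3) ^ (b - 1)) ^ (2 * x)) = 0 :=
      Finset.sum_eq_zero (fun i hi => by
        have hi' : N - i ≠ 0 := by have := Finset.mem_range.mp hi; omega
        rw [h30, zero_pow hi']; ring)
    rw [hz, zero_add] at hcast
    rw [h2N, Nat.choose_self, hm2, (by omega : p - 1 - 2 * N = 0),
      (by omega : N - N = 0)] at hcast
    simp only [pow_zero, one_pow, one_mul, mul_one, Nat.cast_one] at hcast
    have h1 : (p : ZMod 3) ^ ((b - 1) * N) ≠ 0 := pow_ne_zero _ hpne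
    have h2 : ((p : ZMod 3) ^ ((b - 1) * N)) ^ 2 = 1 := by
      simpa using ZMod.pow_card_sub_one_eq_one h1
    calc (p : ZMod 3) = ((p : ZMod 3) ^ (b - 1)) ^ (2 * N) := hcast.symm
      _ = ((p : ZMod 3) ^ ((b - 1) * N)) ^ 2 := by
          rw [← pow_mul, ← pow_mul]; ring_nf
      _ = 1 := h2
  have h3 : p % 3 = 1 := by
    have := congrArg ZMod.val hA
    rwa [ZMod.val_natCast] at this
  -- Step B : IsSquare (3 : ZMod p)
  rw [Finset.sum_range_succ'] at hu
  have hy2 : ((p : ℤ) ^ 2) ∣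
      ∑ i ∈ Finset.range N,
        (p.choose (2 * (i + 1) + 1) : ℤ) * (-2) ^ (i + 1) * 3 ^ (N - (i + 1)) *
          u ^ (p - 1 - 2 * (i + 1)) * ((p : ℤ) ^ (b - 1)) ^ (2 * (i + 1)) := by
    apply Finset.dvd_sum
    intro i _
    apply Dvd.dvd.mul_left
    rw [← pow_mul]
    exact pow_dvd_pow _ (by nlinarith [Nat.one_le_iff_ne_zero.mpr (by omega : b - 1 ≠ 0)])
  obtain ⟨R, hR⟩ := hy2
  rw [hR] at hu
  simp only [Nat.mul_zero, Nat.zero_add, Nat.choose_one_right, pow_zero, Nat.sub_zero,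
    mul_one, one_mul, ← hN] at hu
  -- hu : ↑p^2 * R + ↑p * 3^N * u^(p-1) = ↑p
  have hp0 : (p : ℤ) ≠ 0 := by exact_mod_cast hp.ne_zero
  have hdvd : (p : ℤ) ∣ 1 - 3 ^ N * u ^ (p - 1) := by
    refine ⟨R, ?_⟩
    apply mul_left_cancel₀ hp0
    linear_combination -hu
  have hzp : (3 : ZMod p) ^ N * (u : ZMod p) ^ (p - 1) = 1 := by
    have := (ZMod.intCast_zmod_eq_zero_iff_dvd _ _).mpr hdvd
    push_cast at this
    linear_combination -this
  have hu0 : (u : ZMod p) ≠ 0 := by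
    intro h
    rw [h, zero_pow (by omega : p - 1 ≠ 0), mul_zero] at hzp
    exact zero_ne_one hzp
  rw [ZMod.pow_card_sub_one_eq_one hu0, mul_one] at hzp
  have h3ne : (3 : ZMod p) ≠ 0 := by
    have : ((3 : ℕ) : ZMod p) ≠ 0 := by
      rw [Ne, ZMod.natCast_eq_zero_iff]
      intro h
      have := Nat.le_of_dvd (by norm_num) h
      omega
    exact_mod_cast this
  have hsq : IsSquare (3 : ZMod p) := by
    rw [ZMod.euler_criterion p h3ne, (by omega : p / 2 = N)]
    exact hzp
  -- quadratic reciprocity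
  have hl1 : legendreSym p 3 = 1 := by
    rw [legendreSym.eq_one_iff p (by exact_mod_cast h3ne)]
    exact_mod_cast hsq
  have hl2 : legendreSym 3 p = 1 := by
    rw [legendreSym.eq_one_iff 3 (by exact_mod_cast hpne)]
    rw [show (((p : ℤ) : ZMod 3)) = (p : ZMod 3) by push_cast; rfl, hA]
    exact IsSquare.one
  have hqr := legendreSym.quadratic_reciprocity (p := p) (q := 3)
    (by omega) (by norm_num) (by omega)
  rw [show ((3 : ℕ) : ℤ) = (3 : ℤ) by norm_num, hl1, hl2,
    (by norm_num : (3 : ℕ) / 2 = 1), mul_one, mul_one] at hqr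
  have heven : Even (p / 2) := by
    by_contra hodd
    rw [Nat.not_even_iff_odd] at hodd
    rw [Odd.neg_one_pow hodd] at hqr
    norm_num at hqr
  obtain ⟨k, hk⟩ := heven
  unfold Nat.ModEq
  omega
end

section
/- Let p > 3 be a prime. Then there exists an integer u₀ ≥ 0 such that for every integer b ≥ 2 and every integer u with |u| ≥ u₀, one has f_p(u, p^{b-1}) ≠ p. (In fact f_p(u, p^{b-1}) > p for all such u.) -/
/-- `2r - 1 < 3^r`. -/
lemma two_mul_sub_one_lt_pow (r : ℕ) : 2 * r - 1 < 3 ^ r := by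
  induction r with
  | zero => norm_num
  | succ r ih =>
    have h1 : 0 < 3 ^ r := Nat.pow_pos (by norm_num)
    have h2 : 3 ^ (r + 1) = 3 * 3 ^ r := by rw [pow_succ]; ring
    omega

/-- Key binomial valuation fact: if `3^j ∣ p - 1` then `3^(j+1) ∣ 3^r * C(p, 2r)`
for `1 ≤ r`, `2r ≤ p - 1`. -/
lemma key_binom (p r j : ℕ) (hp : p.Prime) (hp3 : 3 < p) (hj : 3 ^ j ∣ p - 1)
    (hr1 : 1 ≤ r) (hr2 : 2 * r ≤ p - 1) :
    3 ^ (j + 1) ∣ 3 ^ r * p.choose (2 * r) := by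
  -- the identity C(p,2r)·(2r)·(2r-1) = p·((p-1)·C(p-2,2r-2))
  have e1 : p * (p - 1).choose (2 * r - 1) = p.choose (2 * r) * (2 * r) := by
    have h := Nat.add_one_mul_choose_eq (p - 1) (2 * r - 1)
    have h1 : p - 1 + 1 = p := by omega
    have h2 : 2 * r - 1 + 1 = 2 * r := by omega
    rw [h1, h2] at h
    exact h
  have e2 : (p - 1) * (p - 2).choose (2 * r - 2) = (p - 1).choose (2 * r - 1) * (2 * r - 1) := by
    have h := Nat.add_one_mul_choose_eq (p - 2) (2 * r - 2)
    have h1 : p - 2 + 1 = p - 1 := by omega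
    have h2 : 2 * r - 2 + 1 = 2 * r - 1 := by omega
    rw [h1, h2] at h
    exact h
  have hid : p.choose (2 * r) * (2 * r) * (2 * r - 1)
      = p * ((p - 1) * (p - 2).choose (2 * r - 2)) := by
    calc p.choose (2 * r) * (2 * r) * (2 * r - 1)
        = p * (p - 1).choose (2 * r - 1) * (2 * r - 1) := by rw [e1]
      _ = p * ((p - 1).choose (2 * r - 1) * (2 * r - 1)) := by ring
      _ = p * ((p - 1) * (p - 2).choose (2 * r - 2)) := by rw [e2]
  have hdvd : 3 ^ j ∣ p.choose (2 * r) * (2 * r) * (2 * r - 1) := by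
    rw [hid]
    exact hj.trans (dvd_mul_of_dvd_right (dvd_mul_right (p - 1) _) p)
  -- cancel the factor 2
  have hdvd2 : 3 ^ j ∣ p.choose (2 * r) * (r * (2 * r - 1)) * 2 := by
    have : p.choose (2 * r) * (r * (2 * r - 1)) * 2
        = p.choose (2 * r) * (2 * r) * (2 * r - 1) := by ring
    rw [this]; exact hdvd
  have hcop2 : (3 ^ j).Coprime 2 := Nat.Coprime.pow_left _ (by norm_num)
  have hdvd3 : 3 ^ j ∣ p.choose (2 * r) * (r * (2 * r - 1)) :=
    hcop2.dvd_of_dvd_mul_right hdvd2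
  -- split off the 3-part of N := r*(2r-1)
  set N := r * (2 * r - 1) with hN
  have hN0 : N ≠ 0 := by
    have : 1 ≤ r ∧ 1 ≤ 2 * r - 1 := by omega
    exact Nat.mul_ne_zero (by omega) (by omega)
  set a := N.factorization 3 with ha
  set s := N / 3 ^ a with hs
  have hprod : 3 ^ a * s = N := Nat.ordProj_mul_ordCompl_eq_self N 3
  have hs3 : ¬ 3 ∣ s := Nat.not_dvd_ordCompl (by norm_num) hN0
  have haN : 3 ^ a ∣ N := Nat.ordProj_dvd N 3
  -- bound: 3^a ≤ 2r - 1, hence a < r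
  have has : 3 ^ a ≤ 2 * r - 1 := by
    by_cases h3r : 3 ∣ r
    · have hnd : ¬ 3 ∣ (2 * r - 1) := by omega
      have hcop : (3 ^ a).Coprime (2 * r - 1) :=
        Nat.Coprime.pow_left _ ((Nat.Prime.coprime_iff_not_dvd (by norm_num)).mpr hnd)
      have : 3 ^ a ∣ r := hcop.dvd_of_dvd_mul_right haN
      have := Nat.le_of_dvd (by omega) this
      omega
    · have hcop : (3 ^ a).Coprime r :=
        Nat.Coprime.pow_left _ ((Nat.Prime.coprime_iff_not_dvd (by norm_num)).mpr h3r)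
      have : 3 ^ a ∣ 2 * r - 1 := hcop.dvd_of_dvd_mul_left haN
      exact Nat.le_of_dvd (by omega) this
  have har : a < r := by
    have h2 := two_mul_sub_one_lt_pow r
    have : (3:ℕ) ^ a < 3 ^ r := lt_of_le_of_lt has h2
    exact (Nat.pow_lt_pow_iff_right (by norm_num)).mp this
  by_cases hja : j ≤ a
  · -- then 3^(j+1) ∣ 3^(a+1) ∣ 3^r
    have h1 : (3:ℕ) ^ (j + 1) ∣ 3 ^ r := pow_dvd_pow 3 (by omega)
    exact h1.trans (dvd_mul_right _ _)
  · -- cancel 3^a and use coprimality with s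
    have hja' : a < j := by omega
    have hcancel : 3 ^ a * 3 ^ (j - a) ∣ 3 ^ a * (p.choose (2 * r) * s) := by
      have hl : 3 ^ a * 3 ^ (j - a) = 3 ^ j := by
        rw [← pow_add]; congr 1; omega
      have hr' : 3 ^ a * (p.choose (2 * r) * s) = p.choose (2 * r) * N := by
        rw [← hprod]; ring
      rw [hl, hr']
      exact hdvd3
    have h3a0 : (3:ℕ) ^ a ≠ 0 := by positivity
    have hcs : 3 ^ (j - a) ∣ p.choose (2 * r) * s :=
      (mul_dvd_mul_iff_left h3a0).mp hcancel
    have hcop : (3 ^ (j - a)).Coprime s :=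
      Nat.Coprime.pow_left _ ((Nat.Prime.coprime_iff_not_dvd (by norm_num)).mpr hs3)
    have hC : 3 ^ (j - a) ∣ p.choose (2 * r) := hcop.dvd_of_dvd_mul_right hcs
    have hsplit : (3:ℕ) ^ (j + 1) = 3 ^ (a + 1) * 3 ^ (j - a) := by
      rw [← pow_add]; congr 1; omega
    rw [hsplit]
    exact Nat.mul_dvd_mul (pow_dvd_pow 3 (by omega)) hC

/-- Lifting-the-exponent style lemma: if `3 ∣ z - 1` then `3^(j+1) ∣ z^(3^j) - 1`. -/
lemma pow_three_pow_sub_one (z : ℤ) (h : (3:ℤ) ∣ z - 1) :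
    ∀ j : ℕ, (3:ℤ) ^ (j + 1) ∣ z ^ (3 ^ j) - 1 := by
  intro j
  induction j with
  | zero => simpa using h
  | succ j ih =>
    set w := z ^ (3 ^ j) with hw
    have hpow : z ^ (3 ^ (j + 1)) = w ^ 3 := by
      rw [hw, ← pow_mul, pow_succ]
    have h3w : (3:ℤ) ∣ w - 1 :=
      (dvd_pow_self (3:ℤ) (Nat.succ_ne_zero j)).trans ih
    have hfac : w ^ 3 - 1 = (w - 1) * (w ^ 2 + w + 1) := by ring
    have h3q : (3:ℤ) ∣ w ^ 2 + w + 1 := by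
      have : w ^ 2 + w + 1 = (w - 1) * (w + 2) + 3 := by ring
      rw [this]
      exact dvd_add (Dvd.dvd.mul_right h3w _) dvd_rfl
    rw [hpow, hfac, pow_succ]
    exact mul_dvd_mul ih h3q

/-- Main congruence: if `3^j ∣ p - 1` (p an odd prime > 3) and `3 ∤ y`, then
`fpoly p u y ≡ 1 (mod 3^(j+1))`. -/
lemma fpoly_sub_one (p : ℕ) (hp : p.Prime) (hp3 : 3 < p) (u y : ℤ)
    (hy : ¬ (3:ℤ) ∣ y) (j : ℕ) (hj : 3 ^ j ∣ p - 1) :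
    (3:ℤ) ^ (j + 1) ∣ fpoly p u y - 1 := by
  have hodd : p % 2 = 1 := by
    have h2 : ¬ (2 ∣ p) := by
      intro h
      rcases (Nat.Prime.eq_one_or_self_of_dvd hp 2 h) with h' | h' <;> omega
    omega
  set m := (p - 1) / 2 with hm
  have hpm : p = 2 * m + 1 := by omega
  unfold fpoly
  rw [Finset.sum_range_succ]
  have hsum : (3:ℤ) ^ (j + 1) ∣ ∑ i ∈ Finset.range ((p - 1) / 2),
      (p.choose (2 * i + 1) : ℤ) * (-2) ^ i * 3 ^ ((p - 1) / 2 - i) *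
        u ^ (p - 1 - 2 * i) * y ^ (2 * i) := by
    apply Finset.dvd_sum
    intro i hi
    have him : i < m := by
      simpa [hm] using Finset.mem_range.mp hi
    have hsym : p.choose (2 * i + 1) = p.choose (2 * (m - i)) := by
      rw [show 2 * (m - i) = p - (2 * i + 1) by omega,
        Nat.choose_symm (by omega : 2 * i + 1 ≤ p)]
    have hnat : 3 ^ (j + 1) ∣ 3 ^ (m - i) * p.choose (2 * (m - i)) :=
      key_binom p (m - i) j hp hp3 hj (by omega) (by omega)
    have hint : (3:ℤ) ^ (j + 1) ∣ (3:ℤ) ^ (m - i) * (p.choose (2 * (m - i)) : ℤ) := by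
      exact_mod_cast hnat
    rw [hsym]
    have hre : (p.choose (2 * (m - i)) : ℤ) * (-2) ^ i * 3 ^ ((p - 1) / 2 - i) *
        u ^ (p - 1 - 2 * i) * y ^ (2 * i)
        = ((3:ℤ) ^ (m - i) * (p.choose (2 * (m - i)) : ℤ)) *
          ((-2) ^ i * u ^ (p - 1 - 2 * i) * y ^ (2 * i)) := by
      rw [show (p - 1) / 2 - i = m - i from rfl]; ring
    rw [hre]
    exact Dvd.dvd.mul_right hint _
  have hlast : (3:ℤ) ^ (j + 1) ∣
      (p.choose (2 * ((p - 1) / 2) + 1) : ℤ) * (-2) ^ ((p - 1) / 2) *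
        3 ^ ((p - 1) / 2 - (p - 1) / 2) * u ^ (p - 1 - 2 * ((p - 1) / 2)) *
        y ^ (2 * ((p - 1) / 2)) - 1 := by
    have hch : p.choose (2 * ((p - 1) / 2) + 1) = 1 := by
      rw [show 2 * ((p - 1) / 2) + 1 = p by omega]
      exact Nat.choose_self p
    have hz1 : (p - 1) / 2 - (p - 1) / 2 = 0 := by omega
    have hz2 : p - 1 - 2 * ((p - 1) / 2) = 0 := by omega
    rw [hch, hz1, hz2]
    simp only [Nat.cast_one, pow_zero, one_mul, mul_one]
    -- goal : 3^(j+1) ∣ (-2)^m * y^(2m) - 1   (with m = (p-1)/2)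
    have hzz : (-2:ℤ) ^ ((p - 1) / 2) * y ^ (2 * ((p - 1) / 2))
        = (-2 * y ^ 2) ^ m := by
      rw [mul_pow, ← pow_mul]
    rw [hzz]
    -- 3 ∣ (-2*y^2) - 1
    have h3z : (3:ℤ) ∣ (-2 * y ^ 2) - 1 := by
      have hy2 : (3:ℤ) ∣ y ^ 2 - 1 := by
        have hy3 : y % 3 = 1 ∨ y % 3 = 2 := by omega
        have hfac : y ^ 2 - 1 = (y - 1) * (y + 1) := by ring
        rcases hy3 with h | h
        · rw [hfac]; exact Dvd.dvd.mul_right (by omega) _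
        · rw [hfac]; exact Dvd.dvd.mul_left (by omega) _
      have : (-2 * y ^ 2) - 1 = (y ^ 2 - 1) + (-3) * y ^ 2 := by ring
      rw [this]
      exact dvd_add hy2 ⟨-(y ^ 2), by ring⟩
    -- 3^j ∣ m
    have h3m : 3 ^ j ∣ m := by
      have h1 : 3 ^ j ∣ 2 * m := by
        rw [show 2 * m = p - 1 by omega]; exact hj
      have hcop : (3 ^ j).Coprime 2 := Nat.Coprime.pow_left _ (by norm_num)
      exact hcop.dvd_of_dvd_mul_left h1
    obtain ⟨t, ht⟩ := h3m
    set z := (-2:ℤ) * y ^ 2 with hzdef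
    have hzm : z ^ m = (z ^ (3 ^ j)) ^ t := by rw [← pow_mul, ht]
    rw [hzm]
    have hw1 : (3:ℤ) ^ (j + 1) ∣ z ^ (3 ^ j) - 1 := pow_three_pow_sub_one z h3z j
    have hw2 : z ^ (3 ^ j) - 1 ∣ (z ^ (3 ^ j)) ^ t - 1 := by
      have := sub_dvd_pow_sub_pow (z ^ (3 ^ j)) 1 t
      simpa using this
    exact hw1.trans hw2
  have := dvd_add hsum hlast
  have hre2 : (∑ i ∈ Finset.range ((p - 1) / 2),
      (p.choose (2 * i + 1) : ℤ) * (-2) ^ i * 3 ^ ((p - 1) / 2 - i) *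
        u ^ (p - 1 - 2 * i) * y ^ (2 * i)) +
      ((p.choose (2 * ((p - 1) / 2) + 1) : ℤ) * (-2) ^ ((p - 1) / 2) *
        3 ^ ((p - 1) / 2 - (p - 1) / 2) * u ^ (p - 1 - 2 * ((p - 1) / 2)) *
        y ^ (2 * ((p - 1) / 2)) - 1)
      = (∑ i ∈ Finset.range ((p - 1) / 2),
      (p.choose (2 * i + 1) : ℤ) * (-2) ^ i * 3 ^ ((p - 1) / 2 - i) *
        u ^ (p - 1 - 2 * i) * y ^ (2 * i)) +
      (p.choose (2 * ((p - 1) / 2) + 1) : ℤ) * (-2) ^ ((p - 1) / 2) *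
        3 ^ ((p - 1) / 2 - (p - 1) / 2) * u ^ (p - 1 - 2 * ((p - 1) / 2)) *
        y ^ (2 * ((p - 1) / 2)) - 1 := by ring
  rw [hre2] at this
  exact this

/-- For every prime `p > 3` there is a constant `u₀ ≥ 0` such that for all
`b ≥ 2` and all integers `u` with `|u| ≥ u₀` one has `f_p(u, p^(b-1)) ≠ p`
(in fact `f_p(u, p^(b-1)) > p`). -/
theorem stmt13 (p : ℕ) (hp : p.Prime) (hp3 : 3 < p) :
    ∃ u₀ : ℤ, 0 ≤ u₀ ∧ ∀ b : ℕ, 2 ≤ b → ∀ u : ℤ, u₀ ≤ |u| →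
      fpoly p u ((p : ℤ) ^ (b - 1)) ≠ p := by
  refine ⟨0, le_refl 0, ?_⟩
  intro b hb u hu hfp
  -- 3 does not divide y = p^(b-1)
  have hy : ¬ (3:ℤ) ∣ (p : ℤ) ^ (b - 1) := by
    intro h
    have h1 : ((3:ℕ) : ℤ) ∣ ((p ^ (b - 1) : ℕ) : ℤ) := by
      push_cast
      exact_mod_cast h
    have h2 : (3:ℕ) ∣ p ^ (b - 1) := Int.ofNat_dvd.mp h1
    have h3 : (3:ℕ) ∣ p := Nat.Prime.dvd_of_dvd_pow (by norm_num) h2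
    have h4 : 3 = p := (Nat.prime_dvd_prime_iff_eq (by norm_num) hp).mp h3
    omega
  -- the inductive divisibility
  have hall : ∀ j : ℕ, 3 ^ j ∣ p - 1 := by
    intro j
    induction j with
    | zero => simp
    | succ j ih =>
      have h := fpoly_sub_one p hp hp3 u ((p : ℤ) ^ (b - 1)) hy j ih
      rw [hfp] at h
      have hcast : ((p : ℤ) - 1) = (((p - 1 : ℕ)) : ℤ) := by
        rw [Nat.cast_sub hp.one_le]; norm_num
      rw [hcast] at h
      exact_mod_cast h
  have h1 := Nat.le_of_dvd (by omega) (hall p)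
  have h2 := Nat.lt_pow_self (n := p) (show 1 < 3 by norm_num)
  omega
end
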